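/- Let n ≥ 1 and let ν ∈ ℂⁿ satisfy ν_i − ν_j ∉ (1/2)·ℤ for all i ≠ j. For a tuple τ ∈ ℂⁿ write τ̄ = (τ_n, τ_{n−1}, …, τ₁) for its reversal, and define D(τ) = [∏_{1 ≤ j < k ≤ n} (2π)^{τ_k − τ_j} Γ(1 + τ_j − τ_k)] · [∏_{i=1}^{n} 2^{(n−i)·((n+1)/2 − i + 2τ_i)}] · [∏_{1 ≤ i < j ≤ n} π^{−(1 + 2τ̄_i − 2τ̄_j)/2} Γ((1 + 2τ̄_i − 2τ̄_j)/2)] · [∏_{1 ≤ i < j ≤ n} π^{1/2} · Γ((2τ̄_i − 2τ̄_j)/2) / Γ((1 + 2τ̄_i − 2τ̄_j)/2)]. Then for every permutation σ of {1,…,n}, writing ν∘σ = (ν_{σ(1)}, …, ν_{σ(n)}), one has sgn(σ) · D(ν∘σ) = D(ν). -/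

import Mathlib

open Finset Complex

namespace Stmt13Aux

@[to_additive]
lemma prod_pairs_rev {M : Type*} [CommMonoid M] {n : ℕ} (f : Fin n × Fin n → M) :
    ∏ p ∈ Finset.univ.filter (fun p : Fin n × Fin n => p.1 < p.2), f p
      = ∏ p ∈ Finset.univ.filter (fun p : Fin n × Fin n => p.1 < p.2), f (p.2.rev, p.1.rev) := by
  refine Finset.prod_nbij' (fun p => (p.2.rev, p.1.rev)) (fun p => (p.2.rev, p.1.rev))
    ?_ ?_ ?_ ?_ ?_ <;> simp [Fin.rev_lt_rev, Fin.rev_rev, Prod.ext_iff]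

lemma sum_pairs_fst {n : ℕ} (τ : Fin n → ℂ) :
    ∑ p ∈ Finset.univ.filter (fun p : Fin n × Fin n => p.1 < p.2), τ p.1
      = ∑ j : Fin n, ((n - 1 - (j : ℕ) : ℕ) : ℂ) * τ j := by
  rw [Finset.sum_filter, Fintype.sum_prod_type]
  refine Finset.sum_congr rfl fun j _ => ?_
  rw [← Finset.sum_filter]
  have h : Finset.univ.filter (fun k : Fin n => j < k) = Finset.Ioi j := by ext k; simp
  rw [h]
  dsimp only
  rw [Finset.sum_const, Fin.card_Ioi, nsmul_eq_mul]

lemma sum_pairs_snd {n : ℕ} (τ : Fin n → ℂ) :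
    ∑ p ∈ Finset.univ.filter (fun p : Fin n × Fin n => p.1 < p.2), τ p.2
      = ∑ k : Fin n, ((k : ℕ) : ℂ) * τ k := by
  rw [Finset.sum_filter, Fintype.sum_prod_type, Finset.sum_comm]
  refine Finset.sum_congr rfl fun k _ => ?_
  rw [← Finset.sum_filter]
  have h : Finset.univ.filter (fun j : Fin n => j < k) = Finset.Iio k := by ext j; simp
  rw [h]
  dsimp only
  rw [Finset.sum_const, Fin.card_Iio, nsmul_eq_mul]

lemma prod_pairs_Ioi {n : ℕ} (f : Fin n × Fin n → ℂ) :
    ∏ p ∈ Finset.univ.filter (fun p : Fin n × Fin n => p.1 < p.2), f p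
      = ∏ i : Fin n, ∏ j ∈ Finset.Ioi i, f (i, j) := by
  rw [Finset.prod_filter, Fintype.prod_prod_type]
  refine Finset.prod_congr rfl fun i _ => ?_
  rw [← Finset.prod_filter]
  have h : Finset.univ.filter (fun k : Fin n => i < k) = Finset.Ioi i := by ext k; simp
  rw [h]

lemma prod_pairs_sign {n : ℕ} (v : Fin n → ℂ) (σ : Equiv.Perm (Fin n)) :
    ∏ p ∈ Finset.univ.filter (fun p : Fin n × Fin n => p.1 < p.2), (v (σ p.2) - v (σ p.1))
      = ((Equiv.Perm.sign σ : ℤ) : ℂ) *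
        ∏ p ∈ Finset.univ.filter (fun p : Fin n × Fin n => p.1 < p.2), (v p.2 - v p.1) := by
  have h1 := Matrix.det_vandermonde (fun i => v (σ i))
  have h2 : Matrix.vandermonde (fun i => v (σ i)) = (Matrix.vandermonde v).submatrix σ id := by
    ext i j; simp [Matrix.vandermonde_apply]
  rw [h2, Matrix.det_permute, Matrix.det_vandermonde] at h1
  rw [prod_pairs_Ioi, prod_pairs_Ioi]
  dsimp only
  exact_mod_cast h1.symm

lemma prod_pairs_even {n : ℕ} (e : ℂ → ℂ) (he : ∀ x, e (-x) = e x) (v : Fin n → ℂ)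
    (σ : Equiv.Perm (Fin n)) :
    ∏ p ∈ Finset.univ.filter (fun p : Fin n × Fin n => p.1 < p.2), e (v (σ p.2) - v (σ p.1))
      = ∏ p ∈ Finset.univ.filter (fun p : Fin n × Fin n => p.1 < p.2), e (v p.2 - v p.1) := by
  refine Finset.prod_nbij'
    (fun p => if σ p.1 < σ p.2 then (σ p.1, σ p.2) else (σ p.2, σ p.1))
    (fun p => if σ⁻¹ p.1 < σ⁻¹ p.2 then (σ⁻¹ p.1, σ⁻¹ p.2) else (σ⁻¹ p.2, σ⁻¹ p.1))
    ?_ ?_ ?_ ?_ ?_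
  · intro p hp
    simp only [Finset.mem_filter, Finset.mem_univ, true_and] at hp ⊢
    split_ifs with h
    · exact h
    · exact lt_of_le_of_ne (not_lt.mp h) (σ.injective.ne hp.ne')
  · intro p hp
    simp only [Finset.mem_filter, Finset.mem_univ, true_and] at hp ⊢
    split_ifs with h
    · exact h
    · exact lt_of_le_of_ne (not_lt.mp h) (σ⁻¹.injective.ne hp.ne')
  · intro p hp
    simp only [Finset.mem_filter, Finset.mem_univ, true_and] at hp
    by_cases h : σ p.1 < σ p.2 <;>
      simp [h, Equiv.symm_apply_apply, hp, lt_asymm hp]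
  · intro p hp
    simp only [Finset.mem_filter, Finset.mem_univ, true_and] at hp
    by_cases h : σ⁻¹ p.1 < σ⁻¹ p.2 <;>
      simp only [Equiv.Perm.inv_def] at h <;> simp [h, Equiv.apply_symm_apply, hp, lt_asymm hp]
  · intro p hp
    simp only [Finset.mem_filter, Finset.mem_univ, true_and] at hp
    by_cases h : σ p.1 < σ p.2
    · simp [h]
    · simp only [h, if_false]
      have := he (v (σ p.2) - v (σ p.1))
      rw [← this]
      congr 1
      ring

lemma prod_cpow {α : Type*} (s : Finset α) (b : ℂ) (hb : b ≠ 0) (f : α → ℂ) :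
    ∏ a ∈ s, b ^ f a = b ^ (∑ a ∈ s, f a) := by
  simp_rw [Complex.cpow_def_of_ne_zero hb, ← Complex.exp_sum, Finset.mul_sum]

lemma pair_eq (a b : ℂ) (h : ∀ k : ℤ, a - b ≠ (k : ℂ) / 2) :
    ((2 * (Real.pi : ℂ)) ^ (a - b) * Complex.Gamma (1 + b - a)) *
      ((Real.pi : ℂ) ^ (-(1 + 2 * a - 2 * b) / 2) * Complex.Gamma ((1 + 2 * a - 2 * b) / 2)) *
      ((Real.pi : ℂ) ^ ((1 : ℂ) / 2) * Complex.Gamma ((2 * a - 2 * b) / 2)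
        / Complex.Gamma ((1 + 2 * a - 2 * b) / 2))
    = (2 : ℂ) ^ (a - b) * ((Real.pi : ℂ) / Complex.sin ((Real.pi : ℂ) * (a - b))) := by
  have hπ0 : (Real.pi : ℂ) ≠ 0 := Complex.ofReal_ne_zero.mpr Real.pi_ne_zero
  have hΓ : Complex.Gamma ((1 + 2 * a - 2 * b) / 2) ≠ 0 := by
    apply Complex.Gamma_ne_zero
    intro m hm
    exact h (-(2 * m + 1)) (by push_cast; linear_combination hm)
  have h2π : (2 * (Real.pi : ℂ)) ^ (a - b) = (2 : ℂ) ^ (a - b) * (Real.pi : ℂ) ^ (a - b) := by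
    have := Complex.mul_cpow_ofReal_nonneg (by norm_num : (0:ℝ) ≤ 2) Real.pi_pos.le (a - b)
    push_cast at this
    exact this
  have hπs : (Real.pi : ℂ) ^ (a - b) * (Real.pi : ℂ) ^ (-(1 + 2 * a - 2 * b) / 2)
      * (Real.pi : ℂ) ^ ((1 : ℂ) / 2) = 1 := by
    rw [← Complex.cpow_add _ _ hπ0, ← Complex.cpow_add _ _ hπ0,
      show (a - b) + (-(1 + 2 * a - 2 * b) / 2) + 1 / 2 = 0 by ring, Complex.cpow_zero]
  have hΓΓ : Complex.Gamma ((2 * a - 2 * b) / 2) * Complex.Gamma (1 + b - a)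
      = (Real.pi : ℂ) / Complex.sin ((Real.pi : ℂ) * (a - b)) := by
    rw [show (2 * a - 2 * b) / 2 = a - b by ring, show (1 : ℂ) + b - a = 1 - (a - b) by ring]
    exact Complex.Gamma_mul_Gamma_one_sub (a - b)
  rw [h2π, div_eq_mul_inv]
  calc (2:ℂ) ^ (a-b) * (Real.pi:ℂ) ^ (a-b) * Complex.Gamma (1 + b - a) *
        ((Real.pi:ℂ) ^ (-(1 + 2*a - 2*b)/2) * Complex.Gamma ((1 + 2*a - 2*b)/2)) *
        ((Real.pi:ℂ) ^ ((1:ℂ)/2) * Complex.Gamma ((2*a - 2*b)/2) *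
          (Complex.Gamma ((1 + 2*a - 2*b)/2))⁻¹)
      = ((Real.pi:ℂ) ^ (a-b) * (Real.pi:ℂ) ^ (-(1 + 2*a - 2*b)/2) * (Real.pi:ℂ) ^ ((1:ℂ)/2)) *
        (Complex.Gamma ((2*a - 2*b)/2) * Complex.Gamma (1 + b - a)) *
        (Complex.Gamma ((1 + 2*a - 2*b)/2) * (Complex.Gamma ((1 + 2*a - 2*b)/2))⁻¹) *
        (2:ℂ) ^ (a-b) := by ring
    _ = (2:ℂ) ^ (a-b) * ((Real.pi:ℂ) / Complex.sin ((Real.pi:ℂ) * (a - b))) := by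
        rw [hπs, hΓΓ, mul_inv_cancel₀ hΓ]; ring

lemma cast_sub_sub {n : ℕ} (i : Fin n) : ((n - 1 - (i : ℕ) : ℕ) : ℂ) = (n : ℂ) - 1 - (i : ℕ) := by
  have hi := i.isLt
  rw [Nat.cast_sub (by omega), Nat.cast_sub (by omega)]
  push_cast
  ring

lemma exp_sum (n : ℕ) (τ : Fin n → ℂ) :
    (∑ p ∈ Finset.univ.filter (fun p : Fin n × Fin n => p.1 < p.2), (τ p.2 - τ p.1))
      + (∑ i : Fin n, ((n : ℂ) - ((i : ℕ) + 1 : ℕ)) * (((n : ℂ) + 1) / 2 - ((i : ℕ) + 1 : ℕ) + 2 * τ i))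
    = (∑ i : Fin n, ((n : ℂ) - ((i : ℕ) + 1 : ℕ)) * (((n : ℂ) + 1) / 2 - ((i : ℕ) + 1 : ℕ)))
      + ((n : ℂ) - 1) * ∑ i : Fin n, τ i := by
  have hps : ∑ p ∈ Finset.univ.filter (fun p : Fin n × Fin n => p.1 < p.2), (τ p.2 - τ p.1)
      = ∑ k : Fin n, (((k : ℕ) : ℂ) - ((n - 1 - (k : ℕ) : ℕ) : ℂ)) * τ k := by
    rw [Finset.sum_sub_distrib, sum_pairs_snd, sum_pairs_fst, ← Finset.sum_sub_distrib]
    exact Finset.sum_congr rfl fun k _ => by ring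
  rw [hps, Finset.mul_sum, ← Finset.sum_add_distrib, ← Finset.sum_add_distrib]
  refine Finset.sum_congr rfl fun i _ => ?_
  rw [cast_sub_sub i]
  push_cast
  ring

lemma three_prods (n : ℕ) (τ : Fin n → ℂ)
    (hτ : ∀ i j : Fin n, i ≠ j → ∀ k : ℤ, τ i - τ j ≠ (k : ℂ) / 2) :
    (∏ p ∈ Finset.univ.filter (fun p : Fin n × Fin n => p.1 < p.2),
        (2 * (Real.pi : ℂ)) ^ (τ p.2 - τ p.1) * Complex.Gamma (1 + τ p.1 - τ p.2))
    * (∏ p ∈ Finset.univ.filter (fun p : Fin n × Fin n => p.1 < p.2),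
        (Real.pi : ℂ) ^ (-(1 + 2 * τ p.1.rev - 2 * τ p.2.rev) / 2)
          * Complex.Gamma ((1 + 2 * τ p.1.rev - 2 * τ p.2.rev) / 2))
    * (∏ p ∈ Finset.univ.filter (fun p : Fin n × Fin n => p.1 < p.2),
        (Real.pi : ℂ) ^ ((1 : ℂ) / 2)
          * Complex.Gamma ((2 * τ p.1.rev - 2 * τ p.2.rev) / 2)
          / Complex.Gamma ((1 + 2 * τ p.1.rev - 2 * τ p.2.rev) / 2))
    = (2 : ℂ) ^ (∑ p ∈ Finset.univ.filter (fun p : Fin n × Fin n => p.1 < p.2), (τ p.2 - τ p.1))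
      * ∏ p ∈ Finset.univ.filter (fun p : Fin n × Fin n => p.1 < p.2),
          ((Real.pi : ℂ) / Complex.sin ((Real.pi : ℂ) * (τ p.2 - τ p.1))) := by
  have hA : (∏ p ∈ Finset.univ.filter (fun p : Fin n × Fin n => p.1 < p.2),
        (2 * (Real.pi : ℂ)) ^ (τ p.2 - τ p.1) * Complex.Gamma (1 + τ p.1 - τ p.2))
      = ∏ p ∈ Finset.univ.filter (fun p : Fin n × Fin n => p.1 < p.2),
        (2 * (Real.pi : ℂ)) ^ (τ p.1.rev - τ p.2.rev)
          * Complex.Gamma (1 + τ p.2.rev - τ p.1.rev) :=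
    prod_pairs_rev _
  rw [hA, ← Finset.prod_mul_distrib, ← Finset.prod_mul_distrib]
  have key : ∀ p ∈ Finset.univ.filter (fun p : Fin n × Fin n => p.1 < p.2),
      (2 * (Real.pi : ℂ)) ^ (τ p.1.rev - τ p.2.rev) * Complex.Gamma (1 + τ p.2.rev - τ p.1.rev)
        * ((Real.pi : ℂ) ^ (-(1 + 2 * τ p.1.rev - 2 * τ p.2.rev) / 2)
          * Complex.Gamma ((1 + 2 * τ p.1.rev - 2 * τ p.2.rev) / 2))
        * ((Real.pi : ℂ) ^ ((1 : ℂ) / 2)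
          * Complex.Gamma ((2 * τ p.1.rev - 2 * τ p.2.rev) / 2)
          / Complex.Gamma ((1 + 2 * τ p.1.rev - 2 * τ p.2.rev) / 2))
      = (2 : ℂ) ^ (τ p.1.rev - τ p.2.rev)
        * ((Real.pi : ℂ) / Complex.sin ((Real.pi : ℂ) * (τ p.1.rev - τ p.2.rev))) := by
    intro p hp
    simp only [Finset.mem_filter, Finset.mem_univ, true_and] at hp
    exact pair_eq _ _ (hτ _ _ (Fin.rev_injective.ne hp.ne) )
  rw [Finset.prod_congr rfl key, Finset.prod_mul_distrib,
    prod_cpow _ _ two_ne_zero]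
  have hS : (∑ p ∈ Finset.univ.filter (fun p : Fin n × Fin n => p.1 < p.2),
      (τ p.1.rev - τ p.2.rev))
      = ∑ p ∈ Finset.univ.filter (fun p : Fin n × Fin n => p.1 < p.2), (τ p.2 - τ p.1) := by
    have := sum_pairs_rev (n := n) (f := fun p => τ p.1.rev - τ p.2.rev)
    simpa [Fin.rev_rev] using this
  have hH : (∏ p ∈ Finset.univ.filter (fun p : Fin n × Fin n => p.1 < p.2),
      ((Real.pi : ℂ) / Complex.sin ((Real.pi : ℂ) * (τ p.1.rev - τ p.2.rev))))
      = ∏ p ∈ Finset.univ.filter (fun p : Fin n × Fin n => p.1 < p.2),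
        ((Real.pi : ℂ) / Complex.sin ((Real.pi : ℂ) * (τ p.2 - τ p.1))) := by
    have := prod_pairs_rev (n := n)
      (f := fun p => (Real.pi : ℂ) / Complex.sin ((Real.pi : ℂ) * (τ p.1.rev - τ p.2.rev)))
    simpa [Fin.rev_rev] using this
  rw [hS, hH]

end Stmt13Aux

/-- The function `D(τ)` of Statement 13:  with `τ̄` the reversal of `τ` (realized by
`Fin.rev`), `D(τ)` is the product of
* `∏_{j<k} (2π)^{τ_k−τ_j} Γ(1+τ_j−τ_k)`  (the normalizing factor `Λ_{w_l}`),
* `∏_{i=1}^{n} 2^{(n−i)((n+1)/2−i+2τ_i)}`  (the power function at `diag(2^{n−1},…,1)`,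
  written with 1-based index `i = (i₀:ℕ)+1`),
* `∏_{i<j} π^{−(1+2τ̄_i−2τ̄_j)/2} Γ((1+2τ̄_i−2τ̄_j)/2)`  (the factor `Λ_JW(2τ̄)`), and
* `∏_{i<j} π^{1/2} Γ((2τ̄_i−2τ̄_j)/2)/Γ((1+2τ̄_i−2τ̄_j)/2)`  (the degenerate spherical
  Jacquet–Whittaker value). -/
noncomputable def Dfun (n : ℕ) (τ : Fin n → ℂ) : ℂ :=
  (∏ p ∈ Finset.univ.filter (fun p : Fin n × Fin n => p.1 < p.2),
      (2 * (Real.pi : ℂ)) ^ (τ p.2 - τ p.1) * Complex.Gamma (1 + τ p.1 - τ p.2))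
  * (∏ i : Fin n,
      (2 : ℂ) ^ (((n : ℂ) - ((i : ℕ) + 1 : ℕ))
        * (((n : ℂ) + 1) / 2 - ((i : ℕ) + 1 : ℕ) + 2 * τ i)))
  * (∏ p ∈ Finset.univ.filter (fun p : Fin n × Fin n => p.1 < p.2),
      (Real.pi : ℂ) ^ (-(1 + 2 * τ p.1.rev - 2 * τ p.2.rev) / 2)
        * Complex.Gamma ((1 + 2 * τ p.1.rev - 2 * τ p.2.rev) / 2))
  * (∏ p ∈ Finset.univ.filter (fun p : Fin n × Fin n => p.1 < p.2),
      (Real.pi : ℂ) ^ ((1 : ℂ) / 2)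
        * Complex.Gamma ((2 * τ p.1.rev - 2 * τ p.2.rev) / 2)
        / Complex.Gamma ((1 + 2 * τ p.1.rev - 2 * τ p.2.rev) / 2))

namespace Stmt13Aux

lemma Dfun_eq (n : ℕ) (τ : Fin n → ℂ)
    (hτ : ∀ i j : Fin n, i ≠ j → ∀ k : ℤ, τ i - τ j ≠ (k : ℂ) / 2) :
    Dfun n τ = (2 : ℂ) ^
        ((∑ i : Fin n, ((n : ℂ) - ((i : ℕ) + 1 : ℕ)) * (((n : ℂ) + 1) / 2 - ((i : ℕ) + 1 : ℕ)))
          + ((n : ℂ) - 1) * ∑ i : Fin n, τ i)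
      * ∏ p ∈ Finset.univ.filter (fun p : Fin n × Fin n => p.1 < p.2),
          ((Real.pi : ℂ) / Complex.sin ((Real.pi : ℂ) * (τ p.2 - τ p.1))) := by
  have h3 := three_prods n τ hτ
  have hB : (∏ i : Fin n,
        (2 : ℂ) ^ (((n : ℂ) - ((i : ℕ) + 1 : ℕ))
          * (((n : ℂ) + 1) / 2 - ((i : ℕ) + 1 : ℕ) + 2 * τ i)))
      = (2 : ℂ) ^ (∑ i : Fin n, ((n : ℂ) - ((i : ℕ) + 1 : ℕ))
          * (((n : ℂ) + 1) / 2 - ((i : ℕ) + 1 : ℕ) + 2 * τ i)) :=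
    prod_cpow _ _ two_ne_zero _
  have hE : (2 : ℂ) ^ (∑ p ∈ Finset.univ.filter (fun p : Fin n × Fin n => p.1 < p.2),
          (τ p.2 - τ p.1))
        * (2 : ℂ) ^ (∑ i : Fin n, ((n : ℂ) - ((i : ℕ) + 1 : ℕ))
          * (((n : ℂ) + 1) / 2 - ((i : ℕ) + 1 : ℕ) + 2 * τ i))
      = (2 : ℂ) ^
        ((∑ i : Fin n, ((n : ℂ) - ((i : ℕ) + 1 : ℕ)) * (((n : ℂ) + 1) / 2 - ((i : ℕ) + 1 : ℕ)))
          + ((n : ℂ) - 1) * ∑ i : Fin n, τ i) := by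
    rw [← Complex.cpow_add _ _ two_ne_zero]
    congr 1
    exact exp_sum n τ
  unfold Dfun
  rw [hB, ← hE]
  linear_combination ((2 : ℂ) ^ (∑ i : Fin n, ((n : ℂ) - ((i : ℕ) + 1 : ℕ))
      * (((n : ℂ) + 1) / 2 - ((i : ℕ) + 1 : ℕ) + 2 * τ i))) * h3

end Stmt13Aux


/-- If `ν_i − ν_j ∉ (1/2)·ℤ` for all `i ≠ j`, then for every
permutation `σ`, `sgn(σ)·D(ν∘σ) = D(ν)`. -/
theorem stmt_13 (n : ℕ) (hn : 1 ≤ n) (ν : Fin n → ℂ)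
    (hν : ∀ i j : Fin n, i ≠ j → ∀ k : ℤ, ν i - ν j ≠ (k : ℂ) / 2)
    (σ : Equiv.Perm (Fin n)) :
    ((Equiv.Perm.sign σ : ℤ) : ℂ) * Dfun n (fun i => ν (σ i)) = Dfun n ν := by
  classical
  have hν' : ∀ i j : Fin n, i ≠ j → ∀ k : ℤ,
      (fun i => ν (σ i)) i - (fun i => ν (σ i)) j ≠ (k : ℂ) / 2 :=
    fun i j hij k => hν _ _ (fun hc => hij (σ.injective hc)) k
  rw [Stmt13Aux.Dfun_eq n ν hν, Stmt13Aux.Dfun_eq n (fun i => ν (σ i)) hν']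
  have hsum : ∑ i : Fin n, ν (σ i) = ∑ i : Fin n, ν i := Equiv.sum_comp σ ν
  rw [hsum]
  -- nonvanishing of differences
  have hne : ∀ p ∈ Finset.univ.filter (fun p : Fin n × Fin n => p.1 < p.2),
      ν (σ p.2) - ν (σ p.1) ≠ 0 := by
    intro p hp
    simp only [Finset.mem_filter, Finset.mem_univ, true_and] at hp
    have := hν (σ p.2) (σ p.1) (σ.injective.ne hp.ne') 0
    simpa using this
  have hne0 : ∀ p ∈ Finset.univ.filter (fun p : Fin n × Fin n => p.1 < p.2),
      ν p.2 - ν p.1 ≠ 0 := by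
    intro p hp
    simp only [Finset.mem_filter, Finset.mem_univ, true_and] at hp
    have := hν p.2 p.1 hp.ne' 0
    simpa using this
  set F : ℂ → ℂ := fun x => (Real.pi : ℂ) / Complex.sin ((Real.pi : ℂ) * x) / x with hF
  have hFe : ∀ x, F (-x) = F x := by
    intro x
    simp only [hF]
    rw [mul_neg, Complex.sin_neg, div_neg, div_neg, neg_div, neg_neg]
  have hsplit : ∀ d : ℂ, d ≠ 0 →
      (Real.pi : ℂ) / Complex.sin ((Real.pi : ℂ) * d) = d * F d := by
    intro d hd
    show _ = d * ((Real.pi : ℂ) / Complex.sin ((Real.pi : ℂ) * d) / d)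
    rw [mul_comm d, div_mul_cancel₀ _ hd]
  have key : (∏ p ∈ Finset.univ.filter (fun p : Fin n × Fin n => p.1 < p.2),
        ((Real.pi : ℂ) / Complex.sin ((Real.pi : ℂ) * (ν (σ p.2) - ν (σ p.1)))))
      = ((Equiv.Perm.sign σ : ℤ) : ℂ) *
        ∏ p ∈ Finset.univ.filter (fun p : Fin n × Fin n => p.1 < p.2),
          ((Real.pi : ℂ) / Complex.sin ((Real.pi : ℂ) * (ν p.2 - ν p.1))) := by
    calc (∏ p ∈ Finset.univ.filter (fun p : Fin n × Fin n => p.1 < p.2),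
          ((Real.pi : ℂ) / Complex.sin ((Real.pi : ℂ) * (ν (σ p.2) - ν (σ p.1)))))
        = ∏ p ∈ Finset.univ.filter (fun p : Fin n × Fin n => p.1 < p.2),
            ((ν (σ p.2) - ν (σ p.1)) * F (ν (σ p.2) - ν (σ p.1))) :=
          Finset.prod_congr rfl fun p hp => hsplit _ (hne p hp)
      _ = (∏ p ∈ Finset.univ.filter (fun p : Fin n × Fin n => p.1 < p.2),
            (ν (σ p.2) - ν (σ p.1)))
          * ∏ p ∈ Finset.univ.filter (fun p : Fin n × Fin n => p.1 < p.2),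
            F (ν (σ p.2) - ν (σ p.1)) := Finset.prod_mul_distrib
      _ = (((Equiv.Perm.sign σ : ℤ) : ℂ) *
            ∏ p ∈ Finset.univ.filter (fun p : Fin n × Fin n => p.1 < p.2), (ν p.2 - ν p.1))
          * ∏ p ∈ Finset.univ.filter (fun p : Fin n × Fin n => p.1 < p.2),
            F (ν p.2 - ν p.1) := by
          rw [Stmt13Aux.prod_pairs_sign, Stmt13Aux.prod_pairs_even F hFe]
      _ = ((Equiv.Perm.sign σ : ℤ) : ℂ) *
          ∏ p ∈ Finset.univ.filter (fun p : Fin n × Fin n => p.1 < p.2),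
            ((ν p.2 - ν p.1) * F (ν p.2 - ν p.1)) := by
          rw [Finset.prod_mul_distrib]; ring
      _ = ((Equiv.Perm.sign σ : ℤ) : ℂ) *
          ∏ p ∈ Finset.univ.filter (fun p : Fin n × Fin n => p.1 < p.2),
            ((Real.pi : ℂ) / Complex.sin ((Real.pi : ℂ) * (ν p.2 - ν p.1))) := by
          rw [Finset.prod_congr rfl fun p hp => (hsplit _ (hne0 p hp)).symm]
  rw [key]
  rcases Int.units_eq_one_or (Equiv.Perm.sign σ) with h | h <;>
    rw [h] <;> push_cast <;> ring
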